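/- Let Γ be finitely generated and residually finite, and 1 → ℤ → Γ̃ → Γ → 1 a central exact sequence with kernel generated by σ. For each d ∈ ℕ let Γ_d be the central extension 1 → ℤ/d → Γ_d → Γ → 1 obtained as the quotient Γ̃/⟨σ^d⟩. If there is a nilpotent quotient of Γ̃ that is injective on ⟨σ⟩, then Γ_d is residually finite for all d. -/

import Mathlib

/-- A group is residually finite if every nontrivial element survives in some
finite quotient. -/
def ResiduallyFinite (G : Type*) [Group G] : Prop :=
  ∀ g : G, g ≠ 1 → ∃ (F : Type) (_ : Group F) (_ : Finite F) (ρ : G →* F), ρ g ≠ 1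


open Subgroup Function
open scoped commutatorElement

section Identities

variable {G : Type*} [Group G]

private lemma RFaux.normal_of_le_center {H : Subgroup G} (h : H ≤ Subgroup.center G) :
    H.Normal := by
  constructor
  intro n hn g
  have : g * n = n * g := (Subgroup.mem_center_iff.mp (h hn) g)
  rw [show g * n * g⁻¹ = n from by rw [this]; group]
  exact hn

private lemma RFaux.comm_mul_left {u v g : G} (hv : ⁅v, g⁆ ∈ Subgroup.center G) :
    ⁅u * v, g⁆ = ⁅v, g⁆ * ⁅u, g⁆ := by
  have hc : u * ⁅v, g⁆ = ⁅v, g⁆ * u := Subgroup.mem_center_iff.mp hv u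
  have e1 : ⁅u * v, g⁆ = u * ⁅v, g⁆ * (g * u⁻¹ * g⁻¹) := by
    simp only [commutatorElement_def]; group
  rw [e1, mul_assoc u, ← mul_assoc u, hc]
  simp only [commutatorElement_def]; group

private lemma RFaux.comm_mul_right {u g h : G} (hh : ⁅u, h⁆ ∈ Subgroup.center G) :
    ⁅u, g * h⁆ = ⁅u, g⁆ * ⁅u, h⁆ := by
  have hc : g⁻¹ * ⁅u, h⁆ = ⁅u, h⁆ * g⁻¹ := Subgroup.mem_center_iff.mp hh g⁻¹
  have e1 : ⁅u, g * h⁆ = u * g * (u⁻¹ * ⁅u, h⁆) * g⁻¹ := by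
    simp only [commutatorElement_def]; group
  rw [e1, show u * g * (u⁻¹ * ⁅u, h⁆) * g⁻¹ = u * g * u⁻¹ * (⁅u, h⁆ * g⁻¹) from by group,
    ← hc]
  simp only [commutatorElement_def]; group

private lemma RFaux.comm_inv_left {u g : G} (hu : ⁅u, g⁆ ∈ Subgroup.center G) :
    ⁅u⁻¹, g⁆ = ⁅u, g⁆⁻¹ := by
  have hc : u⁻¹ * ⁅u, g⁆⁻¹ = ⁅u, g⁆⁻¹ * u⁻¹ :=
    Subgroup.mem_center_iff.mp ((Subgroup.center G).inv_mem hu) u⁻¹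
  have e1 : ⁅u⁻¹, g⁆ = u⁻¹ * ⁅u, g⁆⁻¹ * u := by
    simp only [commutatorElement_def]; group
  rw [e1, hc]; group

private lemma RFaux.comm_inv_right {u g : G} (hu : ⁅u, g⁆ ∈ Subgroup.center G) :
    ⁅u, g⁻¹⁆ = ⁅u, g⁆⁻¹ := by
  have hc : g⁻¹ * ⁅u, g⁆⁻¹ = ⁅u, g⁆⁻¹ * g⁻¹ :=
    Subgroup.mem_center_iff.mp ((Subgroup.center G).inv_mem hu) g⁻¹
  have e1 : ⁅u, g⁻¹⁆ = g⁻¹ * ⁅u, g⁆⁻¹ * g := by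
    simp only [commutatorElement_def]; group
  rw [e1, hc]; group

private lemma RFaux.comm_pow_left {y h : G} (hy : ⁅y, h⁆ ∈ Subgroup.center G) (n : ℕ) :
    ⁅y ^ n, h⁆ = ⁅y, h⁆ ^ n := by
  induction n with
  | zero => simp [commutatorElement_def]
  | succ n ih =>
      rw [pow_succ, RFaux.comm_mul_left hy, ih, ← pow_succ']

end Identities

section LCS

private lemma RFaux.lcs_map_eq {G H : Type*} [Group G] [Group H] (f : G →* H)
    (hf : Function.Surjective f) (n : ℕ) :
    (Subgroup.lowerCentralSeries (⊤ : Subgroup G) n).map f = Subgroup.lowerCentralSeries (⊤ : Subgroup H) n := by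
  induction n with
  | zero => simpa using Subgroup.map_top_of_surjective f hf
  | succ n ih =>
      show Subgroup.map f ⁅Subgroup.lowerCentralSeries (⊤ : Subgroup G) n, ⊤⁆ = ⁅Subgroup.lowerCentralSeries (⊤ : Subgroup H) n, ⊤⁆
      rw [Subgroup.map_commutator, ih, Subgroup.map_top_of_surjective f hf]

private lemma RFaux.lcs_le_center {G : Type*} [Group G] {n : ℕ}
    (h : Subgroup.lowerCentralSeries (⊤ : Subgroup G) (n + 1) = ⊥) : Subgroup.lowerCentralSeries (⊤ : Subgroup G) n ≤ Subgroup.center G := by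
  have h' : ⁅Subgroup.lowerCentralSeries (⊤ : Subgroup G) n, (⊤ : Subgroup G)⁆ = ⊥ := h
  rw [Subgroup.commutator_eq_bot_iff_le_centralizer] at h'
  rwa [← Subgroup.centralizer_univ, ← Subgroup.coe_top]

/-- The last nontrivial term of the lower central series of a f.g. group is
finitely generated. -/
private lemma RFaux.centfg (c : ℕ) : ∀ (G : Type u) [Group G] [Group.FG G],
    Subgroup.lowerCentralSeries (⊤ : Subgroup G) (c + 1) = ⊥ → (Subgroup.lowerCentralSeries (⊤ : Subgroup G) c).FG := by
  induction c with
  | zero =>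
      intro G _ _ _
      rw [Subgroup.lowerCentralSeries_zero]
      exact (Group.fg_iff_subgroup_fg ⊤).mp inferInstance
  | succ c ih =>
      intro G _ _ hbot
      set D := Subgroup.lowerCentralSeries (⊤ : Subgroup G) (c + 1) with hDdef
      have hDcent : D ≤ Subgroup.center G := RFaux.lcs_le_center hbot
      haveI hDnormal : D.Normal := by rw [hDdef]; infer_instance
      -- the quotient
      have hsur : Function.Surjective (QuotientGroup.mk' D) := QuotientGroup.mk'_surjective D
      have hq : Subgroup.lowerCentralSeries (⊤ : Subgroup (G ⧸ D)) (c + 1) = ⊥ := by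
        rw [← RFaux.lcs_map_eq (QuotientGroup.mk' D) hsur, ← hDdef, Subgroup.map_eq_bot_iff,
          QuotientGroup.ker_mk']
      obtain ⟨Tb, hTb, hTbfin⟩ := Subgroup.fg_iff _ |>.mp (ih (G ⧸ D) hq)
      -- lift generators
      have hlift : ∀ tb ∈ Tb, ∃ t, t ∈ Subgroup.lowerCentralSeries (⊤ : Subgroup G) c ∧ QuotientGroup.mk' D t = tb := by
        intro tb htb
        have : tb ∈ Subgroup.lowerCentralSeries (⊤ : Subgroup (G ⧸ D)) c := hTb ▸ Subgroup.subset_closure htb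
        rw [← RFaux.lcs_map_eq (QuotientGroup.mk' D) hsur] at this
        obtain ⟨t, ht, rfl⟩ := this
        exact ⟨t, ht, rfl⟩
      choose liftf hlift1 hlift2 using hlift
      classical
      let T : Set G := (fun tb : Tb => liftf tb.1 tb.2) '' Set.univ
      have hTfin : T.Finite := by
        haveI : Finite Tb := hTbfin
        exact (Set.finite_univ).image _
      
      have hTsub : T ⊆ (Subgroup.lowerCentralSeries (⊤ : Subgroup G) c : Set G) := by
        rintro t ⟨tb, -, rfl⟩; exact hlift1 _ _
      have hTimage : QuotientGroup.mk' D '' T = Tb := by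
        ext y; constructor
        · rintro ⟨t, ⟨tb, -, rfl⟩, rfl⟩; rw [hlift2]; exact tb.2
        · intro hy; exact ⟨liftf y hy, ⟨⟨y, hy⟩, Set.mem_univ _, rfl⟩, hlift2 _ _⟩
      -- lcs G c = closure T ⊔ D
      have hdecomp : Subgroup.lowerCentralSeries (⊤ : Subgroup G) c = Subgroup.closure T ⊔ D := by
        apply le_antisymm
        · intro u hu
          have h1 : QuotientGroup.mk' D u ∈ Subgroup.closure Tb := by
            rw [hTb, ← RFaux.lcs_map_eq (QuotientGroup.mk' D) hsur]
            exact Subgroup.mem_map_of_mem _ hu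
          rw [← hTimage, ← MonoidHom.map_closure] at h1
          obtain ⟨w, hw, hwu⟩ := h1
          have : u * w⁻¹ ∈ D := by
            rw [← QuotientGroup.ker_mk' D, MonoidHom.mem_ker, map_mul, map_inv, hwu,
              mul_inv_cancel]
          have hu2 : u = (u * w⁻¹) * w := by group
          rw [hu2]
          exact Subgroup.mul_mem _ ((le_sup_right : D ≤ _) this)
            ((le_sup_left : Subgroup.closure T ≤ _) hw)
        · apply sup_le
          · exact Subgroup.closure_le _ |>.mpr hTsub
          · exact Subgroup.lowerCentralSeries_antitone ⊤ (Nat.le_succ c)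
      -- generators of G
      obtain ⟨S, hS, hSfin⟩ := Group.fg_iff.mp (inferInstance : Group.FG G)
      let V : Set G := Set.image2 (fun t s => ⁅t, s⁆) T S
      have hVfin : V.Finite := hTfin.image2 _ hSfin
      have hVD : Subgroup.closure V ≤ D := by
        apply Subgroup.closure_le _ |>.mpr
        rintro v ⟨t, ht, s, hs, rfl⟩
        exact (Subgroup.commutator_mem_commutator (hTsub ht) (Subgroup.mem_top s) :
          ⁅t, s⁆ ∈ ⁅Subgroup.lowerCentralSeries (⊤ : Subgroup G) c, ⊤⁆)
      have hcent : ∀ u ∈ Subgroup.lowerCentralSeries (⊤ : Subgroup G) c, ∀ g : G, ⁅u, g⁆ ∈ Subgroup.center G := by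
        intro u hu g
        exact hDcent (Subgroup.commutator_mem_commutator hu (Subgroup.mem_top g))
      have hTD : Subgroup.lowerCentralSeries (⊤ : Subgroup G) c = Subgroup.closure (T ∪ ↑D) := by
        rw [Subgroup.closure_union, Subgroup.closure_eq, hdecomp]
      have stepU' : ∀ s ∈ S, ∀ u ∈ Subgroup.lowerCentralSeries (⊤ : Subgroup G) c, ⁅u, s⁆ ∈ Subgroup.closure V := by
        intro s hs u hu
        rw [hTD] at hu
        induction hu using Subgroup.closure_induction with
        | mem x hx =>
            rcases hx with hx | hx
            · exact Subgroup.subset_closure (Set.mem_image2_of_mem hx hs)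
            · have : ⁅x, s⁆ = 1 := commutatorElement_eq_one_iff_mul_comm.mpr
                (Subgroup.mem_center_iff.mp (hDcent hx) s).symm
              rw [this]; exact Subgroup.one_mem _
        | one =>
            have : ⁅(1 : G), s⁆ = 1 := by simp [commutatorElement_def]
            rw [this]; exact Subgroup.one_mem _
        | mul x y hx hy px py =>
            rw [RFaux.comm_mul_left (hcent y (by rw [hTD]; exact hy) s)]
            exact Subgroup.mul_mem _ py px
        | inv x hx px =>
            rw [RFaux.comm_inv_left (hcent x (by rw [hTD]; exact hx) s)]
            exact Subgroup.inv_mem _ px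
      have stepA : ∀ u ∈ Subgroup.lowerCentralSeries (⊤ : Subgroup G) c, ∀ g : G, ⁅u, g⁆ ∈ Subgroup.closure V := by
        intro u hu g
        have hg : g ∈ Subgroup.closure S := by rw [hS]; exact Subgroup.mem_top g
        induction hg using Subgroup.closure_induction with
        | mem s hs => exact stepU' s hs u hu
        | one =>
            have : ⁅u, (1 : G)⁆ = 1 := by simp [commutatorElement_def]
            rw [this]; exact Subgroup.one_mem _
        | mul x y hx hy px py =>
            rw [RFaux.comm_mul_right (hcent u hu y)]
            exact Subgroup.mul_mem _ px py
        | inv x hx px =>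
            rw [RFaux.comm_inv_right (hcent u hu x)]
            exact Subgroup.inv_mem _ px
      have hDV : D ≤ Subgroup.closure V := by
        show ⁅Subgroup.lowerCentralSeries (⊤ : Subgroup G) c, (⊤ : Subgroup G)⁆ ≤ _
        exact Subgroup.commutator_le.mpr fun u hu g _ => stepA u hu g
      exact Subgroup.fg_iff _ |>.mpr ⟨V, le_antisymm hVD hDV, hVfin⟩

end LCS

section INF

private lemma RFaux.finite_of_torsion_center (c : ℕ) : ∀ (G : Type u) [Group G] [Group.FG G],
    Subgroup.lowerCentralSeries (⊤ : Subgroup G) c = ⊥ → (∀ y ∈ Subgroup.center G, IsOfFinOrder y) → Finite G := by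
  induction c with
  | zero =>
      intro G _ _ h _
      have : ∀ g : G, g = 1 := fun g => by
        have hg : g ∈ (⊥ : Subgroup G) := h ▸ Subgroup.mem_top g
        simpa using hg
      have : Subsingleton G := ⟨fun a b => by rw [this a, this b]⟩
      exact Finite.of_subsingleton
  | succ c ih =>
      intro G _ _ hbot htor
      set D := Subgroup.lowerCentralSeries (⊤ : Subgroup G) c with hDdef
      have hDcent : D ≤ Subgroup.center G := RFaux.lcs_le_center hbot
      haveI hDnormal : D.Normal := by rw [hDdef]; infer_instance
      have hDfg : D.FG := RFaux.centfg c G hbot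
      letI : CommGroup ↥D :=
        { (inferInstance : Group ↥D) with
          mul_comm := fun a b => Subtype.ext
            (Subgroup.mem_center_iff.mp (hDcent a.2) b.1).symm }
      haveI : Group.FG ↥D := (Group.fg_iff_subgroup_fg D).mpr hDfg
      haveI hDfin : Finite ↥D := by
        apply CommGroup.finite_of_fg_torsion
        intro a
        obtain ⟨n, hn, hpow⟩ := isOfFinOrder_iff_pow_eq_one.mp (htor a.1 (hDcent a.2))
        exact isOfFinOrder_iff_pow_eq_one.mpr ⟨n, hn, Subtype.ext (by
          push_cast [Subgroup.coe_pow]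
          exact hpow)⟩
      -- the quotient
      have hsur : Function.Surjective (QuotientGroup.mk' D) := QuotientGroup.mk'_surjective D
      have hQbot : Subgroup.lowerCentralSeries (⊤ : Subgroup (G ⧸ D)) c = ⊥ := by
        rw [← RFaux.lcs_map_eq (QuotientGroup.mk' D) hsur, ← hDdef, Subgroup.map_eq_bot_iff,
          QuotientGroup.ker_mk']
      have hQtor : ∀ yb ∈ Subgroup.center (G ⧸ D), IsOfFinOrder yb := by
        intro yb hyb
        obtain ⟨y, rfl⟩ := hsur yb
        set m := Nat.card ↥D with hm
        have hmpos : 0 < m := Nat.card_pos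
        have hyD : ∀ h : G, ⁅y, h⁆ ∈ D := by
          intro h
          have h1 : (QuotientGroup.mk' D) ⁅y, h⁆ = 1 := by
            rw [map_commutatorElement]
            exact commutatorElement_eq_one_iff_mul_comm.mpr
              (Subgroup.mem_center_iff.mp hyb ((QuotientGroup.mk' D) h)).symm
          rwa [← QuotientGroup.ker_mk' D, MonoidHom.mem_ker]
        have hym : y ^ m ∈ Subgroup.center G := by
          rw [Subgroup.mem_center_iff]
          intro h
          have h2 : ⁅y ^ m, h⁆ = ⁅y, h⁆ ^ m :=
            RFaux.comm_pow_left (hDcent (hyD h)) m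
          have h3 : (⟨⁅y, h⁆, hyD h⟩ : ↥D) ^ m = 1 := by rw [hm]; exact pow_card_eq_one'
          have h4 : ⁅y, h⁆ ^ m = 1 := by
            have := congrArg (Subgroup.subtype D) h3
            push_cast at this
            simpa using this
          have h5 : ⁅y ^ m, h⁆ = 1 := by rw [h2, h4]
          exact (commutatorElement_eq_one_iff_mul_comm.mp h5).symm
        obtain ⟨n, hn, hpow⟩ := isOfFinOrder_iff_pow_eq_one.mp (htor _ hym)
        exact isOfFinOrder_iff_pow_eq_one.mpr ⟨m * n, by positivity, by
          rw [← map_pow, pow_mul, hpow, map_one]⟩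
      haveI : Finite (G ⧸ D) := ih (G ⧸ D) hQbot hQtor
      exact Finite.of_equiv _ (Subgroup.groupEquivQuotientProdSubgroup (s := D)).symm

end INF

section NilpotentRF

private lemma RFaux.nilpotent_rf (G : Type u) [Group G] [Group.FG G] [Group.IsNilpotent G]
    (x : G) (hx : x ≠ 1) :
    ∃ M : Subgroup G, M.Normal ∧ x ∉ M ∧ Finite (G ⧸ M) := by
  classical
  -- Zorn: a maximal normal subgroup avoiding x
  set s : Set (Subgroup G) := {K | K.Normal ∧ x ∉ K} with hs
  have hbot : (⊥ : Subgroup G) ∈ s := ⟨inferInstance, by simpa using hx⟩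
  have hchainub : ∀ c ⊆ s, IsChain (· ≤ ·) c → ∀ K ∈ c, ∃ ub ∈ s, ∀ L ∈ c, L ≤ ub := by
    intro c hcs hchain K hK
    haveI : Nonempty c := ⟨⟨K, hK⟩⟩
    have hdir : Directed (· ≤ ·) (fun L : c => (L : Subgroup G)) :=
      (IsChain.directedOn hchain).directed_val
    refine ⟨⨆ L : c, (L : Subgroup G), ⟨⟨?_⟩, ?_⟩, fun L hL =>
      le_iSup (fun L : c => (L : Subgroup G)) ⟨L, hL⟩⟩
    · intro n hn g
      obtain ⟨L, hnL⟩ := (Subgroup.mem_iSup_of_directed hdir).mp hn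
      exact (Subgroup.mem_iSup_of_directed hdir).mpr
        ⟨L, (hcs L.2).1.conj_mem n hnL g⟩
    · intro hxmem
      obtain ⟨L, hxL⟩ := (Subgroup.mem_iSup_of_directed hdir).mp hxmem
      exact (hcs L.2).2 hxL
  obtain ⟨M, -, hM⟩ := zorn_le_nonempty₀ s hchainub ⊥ hbot
  haveI hMnormal : M.Normal := hM.prop.1
  have hxM : x ∉ M := hM.prop.2
  refine ⟨M, hMnormal, hxM, ?_⟩
  set H := G ⧸ M with hH
  set xb : H := QuotientGroup.mk' M x with hxb
  have hxbne : xb ≠ 1 := by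
    rw [hxb, Ne, QuotientGroup.mk'_apply, QuotientGroup.eq_one_iff]
    exact hxM
  -- every nontrivial normal subgroup of H contains xb
  have key : ∀ N : Subgroup H, N.Normal → N ≠ ⊥ → xb ∈ N := by
    intro N hNnorm hNne
    set N' := N.comap (QuotientGroup.mk' M) with hN'
    haveI : N'.Normal := hNnorm.comap _
    have hMN' : M ≤ N' := by
      intro m hm
      show QuotientGroup.mk' M m ∈ N
      rw [show (QuotientGroup.mk' M) m = 1 from (QuotientGroup.eq_one_iff m).mpr hm]
      exact N.one_mem
    by_contra hxN
    have hxN' : x ∉ N' := hxN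
    have hmem : N' ∈ s := ⟨inferInstance, hxN'⟩
    have : N' ≤ M := hM.2 hmem hMN'
    apply hNne
    rw [← Subgroup.map_comap_eq_self_of_surjective (QuotientGroup.mk'_surjective M) N,
      ← hN', Subgroup.map_eq_bot_iff, QuotientGroup.ker_mk']
    exact this
  -- the center of H is torsion
  have htor : ∀ y ∈ Subgroup.center H, IsOfFinOrder y := by
    intro y hy
    by_contra hinf
    have hne : ∀ m : ℕ, 0 < m → y ^ m ≠ 1 := by
      intro m hm hpow
      exact hinf (isOfFinOrder_iff_pow_eq_one.mpr ⟨m, hm, hpow⟩)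
    have hkey : ∀ m : ℕ, 0 < m → xb ∈ Subgroup.zpowers (y ^ m) := by
      intro m hm
      apply key
      · exact RFaux.normal_of_le_center (Subgroup.zpowers_le.mpr ((Subgroup.center H).pow_mem hy m))
      · rw [Ne, Subgroup.zpowers_eq_bot]
        exact hne m hm
    obtain ⟨k, hk⟩ := Subgroup.mem_zpowers_iff.mp (hkey 1 one_pos)
    rw [pow_one] at hk
    have hk0 : k ≠ 0 := by
      rintro rfl
      rw [zpow_zero] at hk
      exact hxbne hk.symm
    set m : ℕ := k.natAbs + 1 with hm
    obtain ⟨t, ht⟩ := Subgroup.mem_zpowers_iff.mp (hkey m (Nat.succ_pos _))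
    have hyk : y ^ ((m : ℤ) * t) = y ^ k := by
      rw [zpow_mul, zpow_natCast]
      exact ht.trans hk.symm
    have hinj : Function.Injective fun n : ℤ => y ^ n :=
      injective_zpow_iff_not_isOfFinOrder.mpr hinf
    have hkm : (m : ℤ) * t = k := hinj hyk
    have ht0 : t ≠ 0 := by rintro rfl; simp at hkm; exact hk0 hkm.symm
    have : k.natAbs = m * t.natAbs := by
      rw [← Int.natAbs_natCast m, ← Int.natAbs_mul, hkm]
    have : k.natAbs + 1 ≤ k.natAbs := by
      calc k.natAbs + 1 = m := hm.symm
      _ ≤ m * t.natAbs := Nat.le_mul_of_pos_right m (Int.natAbs_pos.mpr ht0)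
      _ = k.natAbs := this.symm
    omega
  -- conclude
  obtain ⟨c, hc⟩ := Subgroup.nilpotent_iff_lowerCentralSeries.mp (inferInstance : Group.IsNilpotent G)
  have hcH : Subgroup.lowerCentralSeries (⊤ : Subgroup H) c = ⊥ := by
    rw [← RFaux.lcs_map_eq (QuotientGroup.mk' M) (QuotientGroup.mk'_surjective M) c, hc]
    simp
  exact RFaux.finite_of_torsion_center c H hcH htor

end NilpotentRF

section Assembly

private lemma RFaux.shrink {G : Type*} [Group G] {H : Type v} [Group H] [Finite H]
    (f : G →* H) (g : G) (hg : f g ≠ 1) :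
    ∃ (F : Type) (_ : Group F) (_ : Finite F) (ρ : G →* F), ρ g ≠ 1 := by
  haveI : Small.{0} H := by
    haveI : Countable H := Finite.to_countable
    infer_instance
  let me : Shrink.{0} H ≃* H := Shrink.mulEquiv
  haveI : Finite (Shrink.{0} H) := Finite.of_equiv H me.symm.toEquiv
  refine ⟨Shrink.{0} H, inferInstance, inferInstance, me.symm.toMonoidHom.comp f,
    fun h => hg ?_⟩
  have h2 := congrArg me h
  simpa using h2

private lemma RFaux.lift_through {Γt Γd : Type*} [Group Γt] [Group Γd]
    {F : Type v} [Group F] [Finite F]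
    (q : Γt →* Γd) (hq : Function.Surjective q) (φ : Γt →* F)
    (hker : q.ker ≤ φ.ker) (g : Γt) (hg : φ g ≠ 1) :
    ∃ (F' : Type) (_ : Group F') (_ : Finite F') (ρ : Γd →* F'), ρ (q g) ≠ 1 := by
  let φ' := q.liftOfRightInverse (Function.surjInv hq)
      (Function.rightInverse_surjInv hq) ⟨φ, hker⟩
  have h1 : φ' (q g) = φ g :=
    q.liftOfRightInverse_comp_apply (Function.surjInv hq)
      (Function.rightInverse_surjInv hq) ⟨φ, hker⟩ g
  exact RFaux.shrink φ' (q g) (h1 ▸ hg)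

private lemma RFaux.fg_of_extension {Γt Γ : Type*} [Group Γt] [Group Γ] [Group.FG Γ]
    (π : Γt →* Γ) (hπ : Function.Surjective π) (σ : Γt)
    (hker : π.ker = Subgroup.zpowers σ) : Group.FG Γt := by
  classical
  obtain ⟨S, hS, hSfin⟩ := Group.fg_iff.mp (inferInstance : Group.FG Γ)
  choose lift hlift using hπ
  rw [Group.fg_iff]
  refine ⟨lift '' S ∪ {σ}, ?_, (hSfin.image _).union (Set.finite_singleton σ)⟩
  rw [eq_top_iff]
  intro g hg
  have h1 : π g ∈ Subgroup.map π (Subgroup.closure (lift '' S)) := by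
    rw [MonoidHom.map_closure]
    have : π '' (lift '' S) = S := by
      ext y; constructor
      · rintro ⟨-, ⟨z, hz, rfl⟩, rfl⟩; rwa [hlift]
      · intro hy; exact ⟨lift y, ⟨y, hy, rfl⟩, hlift y⟩
    rw [this, hS]
    exact Subgroup.mem_top _
  obtain ⟨w, hw, hwg⟩ := h1
  have h2 : g * w⁻¹ ∈ Subgroup.zpowers σ := by
    rw [← hker, MonoidHom.mem_ker, map_mul, map_inv, hwg, mul_inv_cancel]
  have h3 : g = (g * w⁻¹) * w := by group
  rw [h3]
  apply Subgroup.mul_mem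
  · rw [Subgroup.zpowers_eq_closure] at h2
    exact Subgroup.closure_mono Set.subset_union_right h2
  · exact Subgroup.closure_mono Set.subset_union_left hw

end Assembly


/-- Let `Γ` be finitely generated and residually finite and let
`1 → ℤ → Γ̃ → Γ → 1` be a central exact sequence with kernel generated by a
central element `σ` of infinite order.  For `d ∈ ℕ`, let `Γ_d` be the quotient
`Γ̃/⟨σ^d⟩`, a central extension of `Γ` by `ℤ/d`.  If there is a nilpotent
quotient of `Γ̃` that is injective on `⟨σ⟩`, then `Γ_d` is residually finite for
every `d`. -/
theorem residuallyFinite_mod_d (Γt Γ : Type*) [Group Γt] [Group Γ] [Group.FG Γ]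
    (hΓRF : ResiduallyFinite Γ)
    (π : Γt →* Γ) (hπ : Function.Surjective π)
    (σ : Γt) (hσc : σ ∈ Subgroup.center Γt) (hσinf : ¬ IsOfFinOrder σ)
    (hker : π.ker = Subgroup.zpowers σ)
    (N : Type*) [Group N] [Group.IsNilpotent N]
    (ρ : Γt →* N) (hρ : Function.Surjective ρ)
    (hinj : ∀ k : ℤ, ρ (σ ^ k) = 1 → σ ^ k = 1) :
    ∀ (d : ℕ) (Γd : Type*) [Group Γd] (q : Γt →* Γd),
      Function.Surjective q → q.ker = Subgroup.zpowers (σ ^ d) →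
      ResiduallyFinite Γd := by
  intro d Γd _ q hq hkq gd hgd
  obtain ⟨g, rfl⟩ := hq gd
  have hσd1 : q (σ ^ d) = 1 := by
    have h1 : σ ^ d ∈ q.ker := by rw [hkq]; exact Subgroup.mem_zpowers _
    rwa [MonoidHom.mem_ker] at h1
  by_cases hg : π g = 1
  · -- `g` is a power of `σ`
    have hgker : g ∈ Subgroup.zpowers σ := by rw [← hker]; exact MonoidHom.mem_ker.mpr hg
    obtain ⟨k, hk⟩ := Subgroup.mem_zpowers_iff.mp hgker
    have hnd : ¬ ((d : ℤ) ∣ k) := by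
      rintro ⟨t, rfl⟩
      apply hgd
      rw [← hk, zpow_mul, zpow_natCast, map_zpow, hσd1, one_zpow]
    haveI hfgt : Group.FG Γt := RFaux.fg_of_extension π hπ σ hker
    haveI : Group.FG N := Group.fg_of_surjective hρ
    set z := ρ σ with hz
    have hzc : z ∈ Subgroup.center N := by
      rw [Subgroup.mem_center_iff]
      intro n
      obtain ⟨gn, rfl⟩ := hρ n
      rw [← map_mul, ← map_mul, Subgroup.mem_center_iff.mp hσc gn]
    have hinjσ : Function.Injective fun j : ℤ => σ ^ j :=
      injective_zpow_iff_not_isOfFinOrder.mpr hσinf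
    have hzero : ∀ j : ℤ, z ^ j = 1 → j = 0 := by
      intro j hj
      have h1 : σ ^ j = 1 := hinj j (by rw [map_zpow]; exact hj)
      have h2 : σ ^ j = σ ^ (0 : ℤ) := by rw [h1, zpow_zero]
      exact hinjσ h2
    have hk0 : k ≠ 0 := by
      rintro rfl
      exact hnd (dvd_zero _)
    set e : ℕ := if d = 0 then k.natAbs + 1 else d with he
    have hepos : 0 < e := by
      rw [he]; split
      · positivity
      · omega
    have hed : z ^ d ∈ Subgroup.zpowers (z ^ e) := by
      by_cases h0 : d = 0
      · rw [h0, pow_zero]; exact Subgroup.one_mem _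
      · rw [he, if_neg h0]; exact Subgroup.mem_zpowers _
    have hek : ¬ ((e : ℤ) ∣ k) := by
      by_cases h0 : d = 0
      · rw [he, if_pos h0]
        rintro ⟨t, hteq⟩
        have ht0 : t ≠ 0 := by rintro rfl; rw [mul_zero] at hteq; exact hk0 hteq
        have h1 := congrArg Int.natAbs hteq
        rw [Int.natAbs_mul, Int.natAbs_natCast] at h1
        have h2 : 1 ≤ t.natAbs := Int.natAbs_pos.mpr ht0
        have h3 : k.natAbs + 1 ≤ (k.natAbs + 1) * t.natAbs :=
          Nat.le_mul_of_pos_right _ (by omega)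
        omega
      · rw [he, if_neg h0]; exact hnd
    set P := Subgroup.zpowers (z ^ e) with hP
    haveI hPn : P.Normal :=
      RFaux.normal_of_le_center (Subgroup.zpowers_le.mpr ((Subgroup.center N).pow_mem hzc e))
    haveI : Group.FG (N ⧸ P) := Group.fg_of_surjective (QuotientGroup.mk'_surjective P)
    haveI : Group.IsNilpotent (N ⧸ P) := by
      obtain ⟨cN, hcN⟩ := Subgroup.nilpotent_iff_lowerCentralSeries.mp (inferInstance : Group.IsNilpotent N)
      refine Subgroup.nilpotent_iff_lowerCentralSeries.mpr ⟨cN, ?_⟩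
      rw [← RFaux.lcs_map_eq (QuotientGroup.mk' P) (QuotientGroup.mk'_surjective P), hcN]
      simp
    set x : N ⧸ P := QuotientGroup.mk' P (z ^ k) with hx
    have hxne : x ≠ 1 := by
      rw [hx, Ne, QuotientGroup.mk'_apply, QuotientGroup.eq_one_iff]
      intro hmem
      obtain ⟨t, ht⟩ := Subgroup.mem_zpowers_iff.mp hmem
      apply hek
      refine ⟨t, ?_⟩
      have h1 : z ^ ((e : ℤ) * t) = z ^ k := by
        rw [zpow_mul, zpow_natCast]; exact ht
      have h2 : z ^ ((e : ℤ) * t - k) = 1 := by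
        rw [zpow_sub, h1, mul_inv_cancel]
      have h3 := hzero _ h2
      omega
    obtain ⟨Msub, hMnorm, hxnot, hfin⟩ := RFaux.nilpotent_rf (N ⧸ P) x hxne
    haveI := hMnorm
    haveI := hfin
    set φ : Γt →* (N ⧸ P) ⧸ Msub :=
      ((QuotientGroup.mk' Msub).comp (QuotientGroup.mk' P)).comp ρ with hφ
    have hφker : q.ker ≤ φ.ker := by
      rw [hkq, Subgroup.zpowers_le, MonoidHom.mem_ker]
      show (QuotientGroup.mk' Msub) ((QuotientGroup.mk' P) (ρ (σ ^ d))) = 1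
      have h1 : (QuotientGroup.mk' P) (ρ (σ ^ d)) = 1 := by
        rw [QuotientGroup.mk'_apply, QuotientGroup.eq_one_iff, map_pow]
        exact hed
      rw [h1, map_one]
    have hφg : φ g ≠ 1 := by
      rw [← hk]
      show (QuotientGroup.mk' Msub) ((QuotientGroup.mk' P) (ρ (σ ^ k))) ≠ 1
      rw [map_zpow, ← hz]
      intro h1
      apply hxnot
      rw [QuotientGroup.mk'_apply, QuotientGroup.eq_one_iff] at h1
      exact h1
    exact RFaux.lift_through q hq φ hφker g hφg
  · -- `π g ≠ 1`; use residual finiteness of `Γ`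
    obtain ⟨F, _, _, φ₀, hφ₀⟩ := hΓRF (π g) hg
    have hφker : q.ker ≤ (φ₀.comp π).ker := by
      rw [hkq, Subgroup.zpowers_le, MonoidHom.mem_ker]
      show φ₀ (π (σ ^ d)) = 1
      have h1 : π σ = 1 := by
        rw [← MonoidHom.mem_ker, hker]; exact Subgroup.mem_zpowers σ
      rw [map_pow, h1, one_pow, map_one]
    exact RFaux.lift_through q hq (φ₀.comp π) hφker g hφ₀
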